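/- The dynamic chromatic number of the cycle C_n on n ≥ 3 vertices equals 3 if n ≡ 0 (mod 3), equals 5 if n = 5, and equals 4 otherwise. -/

import Mathlib

open Finset

open scoped Classical in
noncomputable def deg {V : Type*} [Fintype V] (G : SimpleGraph V) (v : V) : ℕ :=
  (Finset.univ.filter (fun u => G.Adj v u)).card

def IsProper {V : Type*} (G : SimpleGraph V) (c : V → ℕ) : Prop :=
  ∀ u v, G.Adj u v → c u ≠ c v

def IsDynamic {V : Type*} [Fintype V] (G : SimpleGraph V) (c : V → ℕ) : Prop :=
  IsProper G c ∧ ∀ v, 2 ≤ deg G v → ∃ a b, G.Adj v a ∧ G.Adj v b ∧ c a ≠ c b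

noncomputable def chrom {V : Type*} (G : SimpleGraph V) : ℕ :=
  sInf {n | ∃ c : V → ℕ, (∀ v, c v < n) ∧ IsProper G c}

noncomputable def dynChrom {V : Type*} [Fintype V] (G : SimpleGraph V) : ℕ :=
  sInf {n | ∃ c : V → ℕ, (∀ v, c v < n) ∧ IsDynamic G c}

def subdiv {V : Type*} (G : SimpleGraph V) : SimpleGraph (V ⊕ G.edgeSet) where
  Adj x y :=
    match x, y with
    | Sum.inl u, Sum.inr e => u ∈ (e : Sym2 V)
    | Sum.inr e, Sum.inl u => u ∈ (e : Sym2 V)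
    | _, _ => False
  symm := ⟨by rintro (u | e) (v | f) h <;> first | exact h | exact h.elim⟩
  loopless := ⟨by rintro (u | e) h <;> exact h⟩

noncomputable instance {V : Type*} [Fintype V] (G : SimpleGraph V) : Fintype G.edgeSet :=
  Fintype.ofFinite _

open SimpleGraph

open scoped Fin.CommRing Fin.NatCast

lemma deg_eq_degree {m : ℕ} (G : SimpleGraph (Fin m)) [DecidableRel G.Adj] (v : Fin m) :
    deg G v = G.degree v := by
  classical
  rw [deg, SimpleGraph.degree, SimpleGraph.neighborFinset_eq_filter]
  congr!

lemma adj_iff {m : ℕ} {u v : Fin (m+3)} :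
    (cycleGraph (m+3)).Adj u v ↔ u = v + 1 ∨ v = u + 1 := by
  rw [show (m+3) = (m+1)+2 by ring] at *
  rw [cycleGraph_adj]
  constructor
  · rintro (h | h)
    · left; rw [sub_eq_iff_eq_add] at h; rw [h]; ring
    · right; rw [sub_eq_iff_eq_add] at h; rw [h]; ring
  · rintro (h | h)
    · left; rw [h]; ring
    · right; rw [h]; ring

lemma key_of_isDynamic {m : ℕ} {c : Fin (m+3) → ℕ}
    (h : IsDynamic (cycleGraph (m+3)) c) (v : Fin (m+3)) :
    c v ≠ c (v+1) ∧ c v ≠ c (v+2) := by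
  obtain ⟨hp, hd⟩ := h
  constructor
  · exact hp v (v+1) (adj_iff.mpr (Or.inr rfl))
  · have hdeg : 2 ≤ deg (cycleGraph (m+3)) (v+1) := by
      rw [deg_eq_degree, cycleGraph_degree_three_le]
    obtain ⟨a, b, ha, hb, hab⟩ := hd (v+1) hdeg
    have hc : ∀ x : Fin (m+3), (cycleGraph (m+3)).Adj (v+1) x → x = v ∨ x = v + 2 := by
      intro x hx
      rcases adj_iff.mp hx with h1 | h1
      · left; exact (add_left_injective 1 h1).symm
      · right; rw [h1]; ring
    rcases hc a ha with h1 | h1 <;> rcases hc b hb with h2 | h2 <;>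
      subst h1 <;> subst h2
    · exact absurd rfl hab
    · exact hab
    · exact hab.symm
    · exact absurd rfl hab

lemma isDynamic_of {m : ℕ} {c : Fin (m+3) → ℕ}
    (h1 : ∀ v, c v ≠ c (v+1)) (h2 : ∀ v, c v ≠ c (v+2)) :
    IsDynamic (cycleGraph (m+3)) c := by
  constructor
  · intro u v huv
    rcases adj_iff.mp huv with h | h
    · rw [h]; exact (h1 v).symm
    · rw [h]; exact h1 u
  · intro v _
    refine ⟨v - 1, v + 1, ?_, ?_, ?_⟩
    · exact adj_iff.mpr (Or.inl (by ring))
    · exact adj_iff.mpr (Or.inr rfl)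
    · have := h2 (v - 1)
      rwa [show v - 1 + 2 = v + 1 by ring] at this

lemma no_three {m : ℕ} (hm : (m+3) % 3 ≠ 0) (c : Fin (m+3) → ℕ) (hb : ∀ v, c v < 3)
    (hd : IsDynamic (cycleGraph (m+3)) c) : False := by
  have key := key_of_isDynamic hd
  have h3 : ∀ v : Fin (m+3), c (v + 3) = c v := by
    intro v
    have k0 := key v
    have k1 := key (v+1)
    have k2 := (key (v+2)).1
    rw [show v+1+1 = v+2 by ring, show v+1+2 = v+3 by ring] at k1
    rw [show v+2+1 = v+3 by ring] at k2
    have b0 := hb v; have b1 := hb (v+1); have b2 := hb (v+2); have b3 := hb (v+3)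
    omega
  have hper : ∀ (k : ℕ) (v : Fin (m+3)), c (v + (3 * k : ℕ)) = c v := by
    intro k
    induction k with
    | zero => intro v; simp
    | succ k ih =>
      intro v
      have hc : ((3 * (k+1) : ℕ) : Fin (m+3)) = ((3*k : ℕ) : Fin (m+3)) + 3 := by
        push_cast; ring
      rw [hc, ← add_assoc, h3, ih]
  obtain ⟨K, q, hKq⟩ : ∃ K q, 3*K = q*(m+3)+1 := by
    rcases Nat.lt_or_ge ((m+3) % 3) 2 with h | h
    · exact ⟨(2*(m+3)+1)/3, 2, by omega⟩
    · exact ⟨((m+3)+1)/3, 1, by omega⟩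
  have hone : ((3*K : ℕ) : Fin (m+3)) = 1 := by
    apply Fin.ext
    rw [Fin.val_natCast, hKq, Nat.mul_add_mod', Fin.val_one]
    exact Nat.mod_eq_of_lt (by omega)
  have := hper K 0
  rw [hone, zero_add] at this
  have h2 := (key 0).1
  rw [zero_add] at h2
  exact h2 this.symm

lemma no_four_c5 (c : Fin 5 → ℕ) (hb : ∀ v, c v < 4)
    (hd : IsDynamic (cycleGraph 5) c) : False := by
  have key := key_of_isDynamic (m := 2) hd
  have k0 := key 0; have k1 := key 1; have k2 := key 2
  have k3 := key 3; have k4 := key 4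
  rw [show ((0:Fin 5)+1) = 1 by decide, show ((0:Fin 5)+2) = 2 by decide] at k0
  rw [show ((1:Fin 5)+1) = 2 by decide, show ((1:Fin 5)+2) = 3 by decide] at k1
  rw [show ((2:Fin 5)+1) = 3 by decide, show ((2:Fin 5)+2) = 4 by decide] at k2
  rw [show ((3:Fin 5)+1) = 4 by decide, show ((3:Fin 5)+2) = 0 by decide] at k3
  rw [show ((4:Fin 5)+1) = 0 by decide, show ((4:Fin 5)+2) = 1 by decide] at k4
  have b0 := hb 0; have b1 := hb 1; have b2 := hb 2; have b3 := hb 3; have b4 := hb 4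
  omega

set_option maxHeartbeats 1000000 in
lemma mem_of (m k : ℕ) (f : ℕ → ℕ) (hbf : ∀ i < m+3, f i < k)
    (h1 : ∀ i < m+3, f i ≠ f ((i+1)%(m+3))) (h2 : ∀ i < m+3, f i ≠ f ((i+2)%(m+3))) :
    ∃ c : Fin (m+3) → ℕ, (∀ v, c v < k) ∧ IsDynamic (cycleGraph (m+3)) c := by
  refine ⟨fun v => f v.val, fun v => hbf v.val v.isLt, isDynamic_of ?_ ?_⟩
  · intro v
    have e : (v+1).val = (v.val+1)%(m+3) := by rw [Fin.add_def, Fin.val_one]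
    show f v.val ≠ f (v+1).val
    rw [e]; exact h1 v.val v.isLt
  · intro v
    have e : (v+2).val = (v.val+2)%(m+3) := by rw [Fin.add_def]; norm_num
    show f v.val ≠ f (v+2).val
    rw [e]; exact h2 v.val v.isLt

def f41 (m i : ℕ) : ℕ := if i = m+2 then 3 else i % 3

def f42 (m i : ℕ) : ℕ :=
  if i = m-2 then 3 else if i = m-1 then 0 else
  if i = m then 2 else if i = m+1 then 1 else if i = m+2 then 3 else i % 3

lemma e1lem (m i : ℕ) (hi : i < m+3) (h : i ≠ m+2) : (i+1) % (m+3) = i+1 :=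
  Nat.mod_eq_of_lt (by omega)

lemma e1lem' (m : ℕ) : (m+2+1) % (m+3) = 0 := by
  rw [show m+2+1 = m+3 from rfl, Nat.mod_self]

lemma e2lem (m i : ℕ) (hi : i < m+3) (h : i ≠ m+2) (h' : i ≠ m+1) : (i+2) % (m+3) = i+2 :=
  Nat.mod_eq_of_lt (by omega)

lemma e2lem' (m : ℕ) : (m+2+2) % (m+3) = 1 := by
  rw [show m+2+2 = (m+3)+1 by ring, Nat.add_mod_left]
  exact Nat.mod_eq_of_lt (by omega)

lemma e2lem'' (m : ℕ) : (m+1+2) % (m+3) = 0 := by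
  rw [show m+1+2 = m+3 from rfl, Nat.mod_self]

set_option maxHeartbeats 1000000 in
lemma mem42 (m : ℕ) (h2 : (m+3) % 3 = 2) (hm : 5 ≤ m) :
    ∃ c : Fin (m+3) → ℕ, (∀ v, c v < 4) ∧ IsDynamic (cycleGraph (m+3)) c := by
  refine mem_of m 4 (f42 m) ?_ ?_ ?_
  · intro i hi; unfold f42; split_ifs <;> first | omega | exact (‹False›).elim
  · intro i hi
    rcases eq_or_ne i (m+2) with h | h
    · rw [h, e1lem' m]; unfold f42; split_ifs <;> first | omega | exact (‹False›).elim
    · rw [e1lem m i hi h]; unfold f42; split_ifs <;> first | omega | exact (‹False›).elim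
  · intro i hi
    rcases eq_or_ne i (m+2) with h | h
    · rw [h, e2lem' m]; unfold f42; split_ifs <;> first | omega | exact (‹False›).elim
    · rcases eq_or_ne i (m+1) with h' | h'
      · rw [h', e2lem'' m]; unfold f42; split_ifs <;> first | omega | exact (‹False›).elim
      · rw [e2lem m i hi h h']; unfold f42; split_ifs <;> first | omega | exact (‹False›).elim

set_option maxHeartbeats 1000000 in
lemma mem41 (m : ℕ) (h1 : (m+3) % 3 = 1) :
    ∃ c : Fin (m+3) → ℕ, (∀ v, c v < 4) ∧ IsDynamic (cycleGraph (m+3)) c := by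
  refine mem_of m 4 (f41 m) ?_ ?_ ?_
  · intro i hi; unfold f41; split_ifs <;> first | omega | exact (‹False›).elim
  · intro i hi
    rcases eq_or_ne i (m+2) with h | h
    · rw [h, e1lem' m]; unfold f41; split_ifs <;> first | omega | exact (‹False›).elim
    · rw [e1lem m i hi h]; unfold f41; split_ifs <;> first | omega | exact (‹False›).elim
  · intro i hi
    rcases eq_or_ne i (m+2) with h | h
    · rw [h, e2lem' m]; unfold f41; split_ifs <;> first | omega | exact (‹False›).elim
    · rcases eq_or_ne i (m+1) with h' | h'
      · rw [h', e2lem'' m]; unfold f41; split_ifs <;> first | omega | exact (‹False›).elim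
      · rw [e2lem m i hi h h']; unfold f41; split_ifs <;> first | omega | exact (‹False›).elim

lemma mem3 (m : ℕ) (h0 : (m+3) % 3 = 0) :
    ∃ c : Fin (m+3) → ℕ, (∀ v, c v < 3) ∧ IsDynamic (cycleGraph (m+3)) c := by
  have hd : 3 ∣ (m+3) := Nat.dvd_of_mod_eq_zero h0
  refine mem_of m 3 (fun i => i % 3) (fun i _ => Nat.mod_lt _ (by omega)) ?_ ?_ <;>
    intro i hi <;> beta_reduce <;> rw [Nat.mod_mod_of_dvd _ hd] <;> omega

lemma mem5 : ∃ c : Fin 5 → ℕ, (∀ v, c v < 5) ∧ IsDynamic (cycleGraph 5) c := by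
  refine mem_of 2 5 (fun i => i) (fun i hi => hi) ?_ ?_ <;> intro i hi <;>
    beta_reduce <;> omega

lemma lb_three {m k : ℕ} (c : Fin (m+3) → ℕ) (hb : ∀ v, c v < k)
    (hd : IsDynamic (cycleGraph (m+3)) c) : 3 ≤ k := by
  have key := key_of_isDynamic hd
  have k0 := key 0
  have k1 := (key 1).1
  rw [zero_add, zero_add] at k0
  rw [one_add_one_eq_two] at k1
  have b0 := hb 0; have b1 := hb 1; have b2 := hb 2
  omega

theorem dynChrom_cycleGraph (n : ℕ) (hn : 3 ≤ n) :
    dynChrom (SimpleGraph.cycleGraph n) =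
      if n % 3 = 0 then 3 else if n = 5 then 5 else 4 := by
  obtain ⟨m, rfl⟩ : ∃ m, n = m + 3 := ⟨n - 3, by omega⟩
  rw [dynChrom]
  by_cases h0 : (m+3) % 3 = 0
  · rw [if_pos h0]
    refine le_antisymm (Nat.sInf_le (mem3 m h0)) (le_csInf ⟨3, mem3 m h0⟩ ?_)
    rintro k ⟨c, hb, hd⟩
    exact lb_three c hb hd
  · rw [if_neg h0]
    by_cases h5 : m + 3 = 5
    · obtain rfl : m = 2 := by omega
      rw [if_pos h5]
      refine le_antisymm (Nat.sInf_le mem5) (le_csInf ⟨5, mem5⟩ ?_)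
      rintro k ⟨c, hb, hd⟩
      by_contra hk
      exact no_four_c5 c (fun v => lt_of_lt_of_le (hb v) (by omega)) hd
    · rw [if_neg h5]
      have hmem : ∃ c : Fin (m+3) → ℕ, (∀ v, c v < 4) ∧ IsDynamic (cycleGraph (m+3)) c := by
        rcases Nat.lt_or_ge ((m+3) % 3) 2 with h | h
        · exact mem41 m (by omega)
        · exact mem42 m (by omega) (by omega)
      refine le_antisymm (Nat.sInf_le hmem) (le_csInf ⟨4, hmem⟩ ?_)
      rintro k ⟨c, hb, hd⟩
      by_contra hk
      exact no_three h0 c (fun v => lt_of_lt_of_le (hb v) (by omega)) hd
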